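/- Let n ∈ ℤ, let Δ(t) = −2t + 5 − 2t⁻¹, and let P₁(t) = (2n+1)·((1/4)Δ(t)² + (1/2)Δ(t) − 3/4). Then the residue at t = 0 of the meromorphic function (1 − t⁻¹)² · P₁(t) / Δ(t)³ equals −(2n+1)/8. Consequently −(1/2) times this residue equals (2n+1)/16. -/

import Mathlib

open Complex

/-- For `Δ(t) = −2t + 5 − 2t⁻¹` and
`P₁(t) = (2n+1)((1/4)Δ² + (1/2)Δ − 3/4)`, the residue at `t = 0` of
`(1 − t⁻¹)² P₁(t)/Δ(t)³` (computed as a small circle integral) equals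
`−(2n+1)/8`, and `−1/2` times it equals `(2n+1)/16`. -/
theorem stmt_10 (n : ℤ) (Δ P₁ : ℂ → ℂ)
    (hΔ : ∀ t, Δ t = -2 * t + 5 - 2 * t⁻¹)
    (hP : ∀ t, P₁ t = (2 * n + 1) * ((1 / 4) * (Δ t) ^ 2 + (1 / 2) * Δ t - 3 / 4)) :
    ∃ ε > (0 : ℝ), ∀ ρ : ℝ, 0 < ρ → ρ < ε →
      ((2 * Real.pi * Complex.I)⁻¹ *
          ∮ t in C(0, ρ), (1 - t⁻¹) ^ 2 * P₁ t / (Δ t) ^ 3) = -(2 * n + 1) / 8 ∧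
      (-(1 / 2) : ℂ) * ((2 * Real.pi * Complex.I)⁻¹ *
          ∮ t in C(0, ρ), (1 - t⁻¹) ^ 2 * P₁ t / (Δ t) ^ 3) = (2 * n + 1) / 16 := by
  refine ⟨1/2, by norm_num, fun ρ hρ hρ' => ?_⟩
  obtain ⟨S, hS⟩ : ∃ S : ℂ → ℂ, ∀ z, S z = -2*z^2 + 5*z - 2 := ⟨_, fun _ => rfl⟩
  obtain ⟨g, hg⟩ : ∃ g : ℂ → ℂ, ∀ z, g z =
      (2*n+1) * (z-1)^2 * ((S z)^2 + 2*z*(S z) - 3*z^2) / (4*(S z)^3) :=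
    ⟨_, fun _ => rfl⟩
  have hsne : ∀ z : ℂ, ‖z‖ < 1/2 → S z ≠ 0 := by
    intro z hz
    have h1 : 2*z - 1 ≠ 0 := by
      intro h
      have hz1 : (2:ℂ)*z = 1 := by linear_combination h
      have : ‖2*z‖ = 1 := by rw [hz1]; simp
      simp [map_mul] at this
      nlinarith [norm_nonneg z]
    have h2 : z - 2 ≠ 0 := by
      intro h
      have hz2 : z = 2 := by linear_combination h
      have : ‖z‖ = 2 := by rw [hz2]; simp
      linarith
    have : S z = -((2*z-1)*(z-2)) := by rw [hS]; ring
    rw [this]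
    exact neg_ne_zero.mpr (mul_ne_zero h1 h2)
  have hgd : DiffContOnCl ℂ g (Metric.ball (0:ℂ) ρ) := by
    apply DifferentiableOn.diffContOnCl
    have hsub : closure (Metric.ball (0:ℂ) ρ) ⊆ {z : ℂ | ‖z‖ < 1/2} := by
      intro z hz
      have := Metric.closure_ball_subset_closedBall hz
      simp [Metric.mem_closedBall, Complex.dist_eq] at this
      simp only [Set.mem_setOf_eq]
      linarith
    apply DifferentiableOn.mono _ hsub
    have hgeq : Set.EqOn g
        (fun z => (2*n+1) * (z-1)^2 * ((-2*z^2+5*z-2)^2 + 2*z*(-2*z^2+5*z-2) - 3*z^2)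
          / (4*(-2*z^2+5*z-2)^3)) {z : ℂ | ‖z‖ < 1/2} := by
      intro z _
      rw [hg, hS]
    apply DifferentiableOn.congr _ hgeq
    apply DifferentiableOn.div
    · fun_prop
    · fun_prop
    · intro z hz
      simp only [Set.mem_setOf_eq] at hz
      have h := hsne z hz
      rw [hS] at h
      intro hc
      apply h
      have h4 : ((-2*z^2+5*z-2 : ℂ))^3 = 0 := by
        have h5 : (4:ℂ) * (-2*z^2+5*z-2)^3 = 0 := hc
        have h6 : (4:ℂ) ≠ 0 := by norm_num
        exact (mul_eq_zero.mp h5).resolve_left h6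
      exact pow_eq_zero_iff (by norm_num) |>.mp h4
  have key : (∮ t in C(0, ρ), (1 - t⁻¹) ^ 2 * P₁ t / (Δ t) ^ 3)
      = (2 * Real.pi * Complex.I) • g 0 := by
    rw [← DiffContOnCl.circleIntegral_sub_inv_smul hgd (by simpa [Metric.mem_ball] using hρ)]
    apply circleIntegral.integral_congr hρ.le
    intro z hz
    simp only [Metric.mem_sphere, Complex.dist_eq, sub_zero] at hz
    have hzne : z ≠ 0 := by
      intro h; rw [h] at hz; simp at hz; linarith
    have hsz : S z ≠ 0 := hsne z (by rw [hz]; linarith)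
    have hΔz : Δ z = S z / z := by
      rw [hΔ, hS]; field_simp
    have hzz : z * z⁻¹ = 1 := mul_inv_cancel₀ hzne
    have hPz : P₁ z = (2*n+1)*((S z)^2 + 2*z*(S z) - 3*z^2) / (4*z^2) := by
      rw [hP, hΔz]
      linear_combination ((2*(n:ℂ)+1) * (3/4) * (1 + z * z⁻¹) - (2*(n:ℂ)+1)/2 * S z * z⁻¹) * hzz
    have hΔ3 : Δ z ^ 3 = (S z)^3 / z^3 := by rw [hΔz, div_pow]
    have h1z : (1:ℂ) - z⁻¹ = (z - 1) / z := by field_simp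
    show (1 - z⁻¹) ^ 2 * P₁ z / Δ z ^ 3 = (z - 0)⁻¹ • g z
    rw [hPz, hΔ3, h1z, smul_eq_mul, hg, sub_zero]
    rw [div_pow, div_mul_div_comm, div_div_eq_mul_div, div_mul_eq_mul_div, div_div,
      inv_mul_eq_div, div_div, div_eq_div_iff]
    · ring
    · simp [hzne, hsz]
    · simp [hzne, hsz]
  have h0 : g 0 = -(2 * n + 1) / 8 := by
    rw [hg, hS]
    norm_num
    ring
  rw [key, h0, smul_eq_mul]
  have hne : (2 * ↑Real.pi * Complex.I) ≠ 0 := by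
    simp [Real.pi_ne_zero, Complex.I_ne_zero]
  constructor
  · rw [inv_mul_cancel_left₀ hne]
  · rw [inv_mul_cancel_left₀ hne]; ring
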